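/- The envelope of the one-parameter family of lines u(u−𝓛)·y + (𝓜(𝓛−𝓝−u)+𝓝u)·x + 𝓝(𝓜−u)·u = 0, for parameter u ∈ (0, 𝓛−𝓝], lies on the ellipse (𝓛y − 𝓝𝓜 + (𝓜−𝓝)x)² + 4𝓜(𝓛−𝓝)·x·(𝓝−y) = 0, where 0 < 𝓝 < 𝓛 < 𝓜 are real parameters. -/

import Mathlib

/-- The envelope of the family of lines
`F(x,y,u) = u(u-𝓛)y + (𝓜(𝓛-𝓝-u)+𝓝u)x + 𝓝(𝓜-u)u = 0`, `u ∈ (0, 𝓛-𝓝]`,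
lies on the ellipse `(𝓛y - 𝓝𝓜 + (𝓜-𝓝)x)² + 4𝓜(𝓛-𝓝)x(𝓝-y) = 0`:
any point `(x,y)` satisfying `F(x,y,u) = 0` and `∂F/∂u(x,y,u) = 0` for some
parameter `u` in the range satisfies the ellipse equation. -/
theorem envelope_on_ellipse (𝓛 𝓜 𝓝 x y u : ℝ)
    (h𝓝 : 0 < 𝓝) (h𝓝𝓛 : 𝓝 < 𝓛) (h𝓛𝓜 : 𝓛 < 𝓜) (hu : 0 < u) (hu' : u ≤ 𝓛 - 𝓝)
    (hF : u * (u - 𝓛) * y + (𝓜 * (𝓛 - 𝓝 - u) + 𝓝 * u) * x + 𝓝 * (𝓜 - u) * u = 0)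
    (hFu : deriv (fun s : ℝ =>
        s * (s - 𝓛) * y + (𝓜 * (𝓛 - 𝓝 - s) + 𝓝 * s) * x + 𝓝 * (𝓜 - s) * s) u = 0) :
    (𝓛 * y - 𝓝 * 𝓜 + (𝓜 - 𝓝) * x) ^ 2 + 4 * 𝓜 * (𝓛 - 𝓝) * x * (𝓝 - y) = 0 := by
  have hder : HasDerivAt (fun s : ℝ =>
      s * (s - 𝓛) * y + (𝓜 * (𝓛 - 𝓝 - s) + 𝓝 * s) * x + 𝓝 * (𝓜 - s) * s)
      ((2 * u - 𝓛) * y + (𝓝 - 𝓜) * x + (𝓝 * 𝓜 - 2 * 𝓝 * u)) u := by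
    have h1 : HasDerivAt (fun s : ℝ => s * (s - 𝓛) * y)
        ((u + (u - 𝓛)) * y) u :=
      (((hasDerivAt_id u).mul ((hasDerivAt_id u).sub_const 𝓛)).mul_const y).congr_deriv
        (by simp only [id_eq]; ring)
    have h2 : HasDerivAt (fun s : ℝ => (𝓜 * (𝓛 - 𝓝 - s) + 𝓝 * s) * x)
        ((𝓜 * (0 - 1) + 𝓝) * x) u := by
      have := ((((hasDerivAt_const u (𝓛 - 𝓝)).sub (hasDerivAt_id u)).const_mul 𝓜).add
        ((hasDerivAt_id u).const_mul 𝓝)).mul_const x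
      exact this.congr_deriv (by norm_num)
    have h3 : HasDerivAt (fun s : ℝ => 𝓝 * (𝓜 - s) * s)
        (𝓝 * (𝓜 - u) - 𝓝 * u) u := by
      exact ((((hasDerivAt_const u 𝓜).sub (hasDerivAt_id u)).const_mul 𝓝).mul
        (hasDerivAt_id u)).congr_deriv (by simp only [id_eq, Pi.sub_apply]; ring)
    exact ((h1.add h2).add h3).congr_deriv (by ring)
  have hd : (2 * u - 𝓛) * y + (𝓝 - 𝓜) * x + (𝓝 * 𝓜 - 2 * 𝓝 * u) = 0 := by
    rw [← hder.deriv]; exact hFu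
  linear_combination (-4 * (y - 𝓝)) * hF +
    ((2 * u - 𝓛) * y + (𝓝 - 𝓜) * x + (𝓝 * 𝓜 - 2 * 𝓝 * u)) * hd
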